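/- Let P be even with 0 < P ≤ n, let c ∈ Z_{1+P/2} and d ∈ Z_2. Then the constrained shifted VT code C_CSVT(n, P; c, d) is an (n, 2; D_1)-reconstruction code; that is, for all distinct codewords x, y ∈ C_CSVT(n, P; c, d), we have |D_1(x) ∩ D_1(y)| ≤ 1. -/

import Mathlib

/-- The `t`-deletion ball of a binary word `x`: all subsequences of `x`
of length `|x| - t` (empty when `t > |x|`). -/
def deletionBall (t : ℕ) (x : List Bool) : Set (List Bool) :=
  {z | z.Sublist x ∧ z.length + t = x.length}

/-- The VT syndrome `∑_{i=1}^n i·x_i` (1-indexed). -/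
def synd (x : List Bool) : ℕ :=
  ∑ i ∈ Finset.range x.length, (i + 1) * (if x.getD i false then 1 else 0)

/-- The Hamming weight `∑_{i=1}^n x_i`. -/
def wt (x : List Bool) : ℕ :=
  ∑ i ∈ Finset.range x.length, (if x.getD i false then 1 else 0)

/-- A word is 2-periodic if every symbol equals the symbol two positions later. -/
def TwoPeriodic (z : List Bool) : Prop :=
  ∀ k, k + 2 < z.length → z.getD k false = z.getD (k + 2) false

/-- The constrained shifted VT code `C_CSVT(n, P; c, d)`. -/
def CSVT (n P c d : ℕ) : Set (List Bool) :=
  {x | x.length = n ∧ synd x % (1 + P / 2) = c ∧ wt x % 2 = d ∧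
    ∀ z : List Bool, z <:+: x → TwoPeriodic z → z.length ≤ P}

open List

/-- Alternating word of length `n` starting with `a`. -/
def alt : Bool → ℕ → List Bool
  | _, 0 => []
  | a, (n+1) => a :: alt (!a) n

lemma alt_length (a : Bool) (n : ℕ) : (alt a n).length = n := by
  induction n generalizing a with
  | zero => rfl
  | succ n ih => simp [alt, ih]

lemma alt_two_step (a : Bool) (n : ℕ) : alt a (n+2) = a :: (!a) :: alt a n := by
  simp [alt]

lemma wt_nil : wt [] = 0 := by simp [wt]

lemma synd_nil : synd [] = 0 := by simp [synd]

lemma wt_cons (b : Bool) (l : List Bool) :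
    wt (b :: l) = (if b then 1 else 0) + wt l := by
  unfold wt
  rw [List.length_cons, Finset.sum_range_succ']
  simp [add_comm]

lemma synd_cons (b : Bool) (l : List Bool) :
    synd (b :: l) = (if b then 1 else 0) + (synd l + wt l) := by
  unfold synd wt
  rw [List.length_cons, Finset.sum_range_succ']
  simp only [List.getD_cons_succ, List.getD_cons_zero]
  have h : ∀ i ∈ Finset.range l.length, (i + 1 + 1) * (if l.getD i false then 1 else 0)
      = (i + 1) * (if l.getD i false then 1 else 0) + (if l.getD i false then 1 else 0) := by
    intro i _; ring
  rw [Finset.sum_congr rfl h, Finset.sum_add_distrib]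
  ring

lemma wt_append (s t : List Bool) : wt (s ++ t) = wt s + wt t := by
  induction s with
  | nil => simp [wt_nil]
  | cons b s ih => simp only [List.cons_append, wt_cons, ih]; ring

lemma synd_append (s t : List Bool) :
    synd (s ++ t) = synd s + synd t + s.length * wt t := by
  induction s with
  | nil => simp [synd_nil]
  | cons b s ih =>
    simp only [List.cons_append, synd_cons, wt_append, ih, List.length_cons]
    ring

lemma wt_alt_even (a : Bool) (k : ℕ) : wt (alt a (2*k)) = k := by
  induction k generalizing a with
  | zero => simp [alt, wt_nil]
  | succ k ih =>
    have h2 : 2*(k+1) = 2*k + 2 := by ring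
    rw [h2, alt_two_step, wt_cons, wt_cons, ih]
    cases a <;> simp <;> omega

lemma wt_alt_odd (a : Bool) (k : ℕ) :
    wt (alt a (2*k+1)) = k + (if a then 1 else 0) := by
  induction k with
  | zero => cases a <;> simp [alt, wt_cons, wt_nil]
  | succ k ih =>
    have h2 : 2*(k+1)+1 = (2*k+1) + 2 := by ring
    rw [h2, alt_two_step, wt_cons, wt_cons, ih]
    cases a <;> simp <;> ring

lemma synd_alt_true (k : ℕ) : synd (alt true (2*k)) = k*k := by
  induction k with
  | zero => simp [alt, synd_nil]
  | succ k ih =>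
    have h2 : 2*(k+1) = 2*k + 2 := by ring
    rw [h2, alt_two_step]
    simp only [synd_cons, wt_cons, Bool.not_true, ih, wt_alt_even]
    simp; ring

lemma synd_alt_false (k : ℕ) : synd (alt false (2*k)) = k*k + k := by
  induction k with
  | zero => simp [alt, synd_nil]
  | succ k ih =>
    have h2 : 2*(k+1) = 2*k + 2 := by ring
    rw [h2, alt_two_step]
    simp only [synd_cons, wt_cons, Bool.not_false, ih, wt_alt_even]
    simp; ring

lemma alt_getD : ∀ (n k : ℕ) (a : Bool), k < n →
    (alt a n).getD k false = if k % 2 = 0 then a else !a := by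
  intro n
  induction n with
  | zero => intro k a hk; omega
  | succ n ih =>
    intro k a hk
    cases k with
    | zero => simp [alt]
    | succ k =>
      have h := ih k (!a) (by omega)
      show (alt (!a) n).getD k false = _
      rw [h]
      rcases Nat.mod_two_eq_zero_or_one k with hm | hm
      · have : (k+1) % 2 = 1 := by omega
        simp [hm, this]
      · have : (k+1) % 2 = 0 := by omega
        simp [hm, this]

lemma twoPeriodic_alt (a : Bool) (n : ℕ) : TwoPeriodic (alt a n) := by
  intro k hk
  rw [alt_length] at hk
  rw [alt_getD n k a (by omega), alt_getD n (k+2) a (by omega)]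
  have h : (k+2) % 2 = k % 2 := by omega
  rw [h]

lemma sublist_cons_len {a : Bool} {z t : List Bool} (h : z <+ a :: t)
    (hl : z.length = t.length) :
    z = t ∨ ∃ z₀, z = a :: z₀ ∧ z₀ <+ t ∧ z₀.length + 1 = t.length := by
  cases h with
  | cons _ h' => exact Or.inl (h'.eq_of_length hl)
  | cons_cons _ h' => exact Or.inr ⟨_, rfl, h', by simpa using hl⟩

/-- Core spine lemma: if the heads differ and each tail is a subsequence of the
other word, the two words start with complementary alternating segments. -/
lemma core : ∀ (n : ℕ) (a b : Bool) (x' y' : List Bool), x'.length ≤ n →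
    x'.length = y'.length → (!a) = b → x' <+ b :: y' → y' <+ a :: x' →
    ∃ L v, a :: x' = alt a (L+1) ++ v ∧ b :: y' = alt b (L+1) ++ v := by
  intro n
  induction n with
  | zero =>
    intro a b x' y' hn hl hab hx hy
    have hx0 : x' = [] := List.length_eq_zero_iff.mp (by omega)
    have hy0 : y' = [] := List.length_eq_zero_iff.mp (by omega)
    subst hx0; subst hy0
    exact ⟨0, [], by simp [alt], by simp [alt]⟩
  | succ n ih =>
    intro a b x' y' hn hl hab hx hy
    rcases sublist_cons_len hx hl with heq | ⟨w, hxw, hwy, hwl⟩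
    · subst heq
      exact ⟨0, x', by simp [alt], by simp [alt]⟩
    · rcases sublist_cons_len hy hl.symm with heq | ⟨w', hyw, hwx, hwl'⟩
      · exact ⟨0, x', by simp [alt], by rw [heq]; simp [alt]⟩
      · have hba : (!b) = a := by rw [← hab, Bool.not_not]
        have h1 : w <+ a :: w' := by rw [← hyw]; exact hwy
        have h2 : w' <+ b :: w := by rw [← hxw]; exact hwx
        have hlen : w.length ≤ n := by
          have := congrArg List.length hxw; simp at this; omega
        have hll : w.length = w'.length := by
          have h3 := congrArg List.length hxw
          have h4 := congrArg List.length hyw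
          simp at h3 h4; omega
        obtain ⟨L, v, hh1, hh2⟩ := ih b a w w' hlen hll hba h1 h2
        refine ⟨L+1, v, ?_, ?_⟩
        · rw [hxw]
          have ha : alt a (L+1+1) = a :: alt b (L+1) := by rw [← hab]; rfl
          rw [ha, List.cons_append, ← hh1]
        · rw [hyw]
          have hb : alt b (L+1+1) = b :: alt a (L+1) := by rw [← hba]; rfl
          rw [hb, List.cons_append, ← hh2]

/-- Mixed case of the main lemma: `z = x'`, `z' = a :: z₀'` with common head `a`. -/
lemma main_mixed (n : ℕ)
    (IH : ∀ x y z z' : List Bool, x.length ≤ n → x.length = y.length →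
      z.length + 1 = x.length → z'.length + 1 = x.length →
      z <+ x → z <+ y → z' <+ x → z' <+ y → x ≠ y → z ≠ z' →
      ∃ u a L v, x = u ++ alt a (L+1) ++ v ∧ y = u ++ alt (!a) (L+1) ++ v)
    (a : Bool) (x' y' z₀' : List Bool)
    (hlen : x'.length ≤ n) (hl : x'.length = y'.length)
    (hxy : x' ≠ y')
    (hz'x : z₀' <+ x') (hz'y : z₀' <+ y') (hz'l : z₀'.length + 1 = x'.length)
    (hzy : x' <+ a :: y') (hne : x' ≠ a :: z₀') :
    ∃ u a' L v, a :: x' = u ++ alt a' (L+1) ++ v ∧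
      a :: y' = u ++ alt (!a') (L+1) ++ v := by
  rcases sublist_cons_len hzy hl with heq | ⟨w, hxw, hwy, hwl⟩
  · exact absurd heq hxy
  · have hwx : w <+ x' := by rw [hxw]; exact List.sublist_cons_self a w
    have hwz : w ≠ z₀' := by
      intro h; apply hne; rw [hxw, h]
    have hwll : w.length + 1 = x'.length := by
      have := congrArg List.length hxw; simp at this; omega
    obtain ⟨u, a', L, v, h1, h2⟩ :=
      IH x' y' w z₀' hlen hl hwll hz'l hwx hwy hz'x hz'y hxy hwz
    exact ⟨a :: u, a', L, v, by rw [h1]; simp, by rw [h2]; simp⟩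

/-- Main structure lemma: two distinct common one-deletion subsequences force
the complementary-alternating-middle structure. -/
lemma main : ∀ (n : ℕ) (x y z z' : List Bool), x.length ≤ n →
    x.length = y.length → z.length + 1 = x.length → z'.length + 1 = x.length →
    z <+ x → z <+ y → z' <+ x → z' <+ y → x ≠ y → z ≠ z' →
    ∃ u a L v, x = u ++ alt a (L+1) ++ v ∧ y = u ++ alt (!a) (L+1) ++ v := by
  intro n
  induction n with
  | zero => intro x y z z' hn hl hzl hz'l; omega
  | succ n ih =>
    intro x y z z' hn hl hzl hz'l hzx hzy hz'x hz'y hxy hne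
    rcases x with _ | ⟨a, x'⟩
    · simp at hzl
    rcases y with _ | ⟨b, y'⟩
    · simp at hl
    ·
      have hlx : x'.length = y'.length := by simp at hl; omega
      by_cases hab : a = b
      · subst hab
        have hx'y' : x' ≠ y' := fun h => hxy (by rw [h])
        have hlen : x'.length ≤ n := by simp at hn; omega
        rcases sublist_cons_len hzx (by simp at hzl ⊢; omega) with hz1 | ⟨z₀, hz₀, hz₀x, hz₀l⟩
        · rcases sublist_cons_len hz'x (by simp at hz'l ⊢; omega) with hz'1 | ⟨z₀', hz₀', hz₀'x, hz₀'l⟩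
          · exact absurd (hz1.trans hz'1.symm) hne
          · -- z = x', z' = a :: z₀'
            have hz'yy : z₀' <+ y' := by
              rw [hz₀'] at hz'y; exact List.cons_sublist_cons.mp hz'y
            have hzyy : x' <+ a :: y' := by rw [← hz1]; exact hzy
            have hne' : x' ≠ a :: z₀' := by
              intro h; apply hne; rw [hz1, h, hz₀']
            exact main_mixed n ih a x' y' z₀' hlen hlx hx'y' hz₀'x hz'yy
              (by omega) hzyy hne'
        · rcases sublist_cons_len hz'x (by simp at hz'l ⊢; omega) with hz'1 | ⟨z₀', hz₀', hz₀'x, hz₀'l⟩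
          · -- z = a :: z₀, z' = x'
            have hzyy : z₀ <+ y' := by
              rw [hz₀] at hzy; exact List.cons_sublist_cons.mp hzy
            have hz'yy : x' <+ a :: y' := by rw [← hz'1]; exact hz'y
            have hne' : x' ≠ a :: z₀ := by
              intro h; apply hne; rw [hz'1, h, hz₀]
            exact main_mixed n ih a x' y' z₀ hlen hlx hx'y' hz₀x hzyy
              (by omega) hz'yy hne'
          · -- both cons
            have hzyy : z₀ <+ y' := by
              rw [hz₀] at hzy; exact List.cons_sublist_cons.mp hzy
            have hz'yy : z₀' <+ y' := by
              rw [hz₀'] at hz'y; exact List.cons_sublist_cons.mp hz'y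
            have hnez : z₀ ≠ z₀' := by
              intro h; apply hne; rw [hz₀, hz₀', h]
            obtain ⟨u, a', L, v, h1, h2⟩ :=
              ih x' y' z₀ z₀' hlen hlx (by omega) (by omega) hz₀x hzyy hz₀'x hz'yy hx'y' hnez
            exact ⟨a :: u, a', L, v, by rw [h1]; simp, by rw [h2]; simp⟩
      · -- differing heads
        have hba : (!a) = b := by
          revert hab; cases a <;> cases b <;> simp
        -- z is x' or y'
        have hzc : z = x' ∨ z = y' := by
          rcases sublist_cons_len hzx (by simp at hzl ⊢; omega) with h1 | ⟨z₀, hz₀, _, _⟩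
          · exact Or.inl h1
          · rcases sublist_cons_len hzy (by simp at hzl ⊢; omega) with h2 | ⟨z₁, hz₁, _, _⟩
            · exact Or.inr h2
            · exfalso; apply hab
              have := hz₀.symm.trans hz₁
              exact (List.cons.injEq _ _ _ _ ▸ this).1
        have hz'c : z' = x' ∨ z' = y' := by
          rcases sublist_cons_len hz'x (by simp at hz'l ⊢; omega) with h1 | ⟨z₀, hz₀, _, _⟩
          · exact Or.inl h1
          · rcases sublist_cons_len hz'y (by simp at hz'l ⊢; omega) with h2 | ⟨z₁, hz₁, _, _⟩
            · exact Or.inr h2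
            · exfalso; apply hab
              have := hz₀.symm.trans hz₁
              exact (List.cons.injEq _ _ _ _ ▸ this).1
        have hx'y' : x' ≠ y' := by
          intro h
          subst h
          rcases hzc with h1 | h1 <;> rcases hz'c with h2 | h2 <;>
            exact hne (h1.trans h2.symm)
        -- both orders give the same hypotheses for `core`
        have hcx : x' <+ b :: y' := by
          rcases hzc with h1 | h1
          · rw [← h1]; exact hzy
          · rcases hz'c with h2 | h2
            · rw [← h2]; exact hz'y
            · exact absurd (h1.trans h2.symm) (by intro h; exact hne h)
        have hcy : y' <+ a :: x' := by
          rcases hzc with h1 | h1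
          · rcases hz'c with h2 | h2
            · exact absurd (h1.trans h2.symm) (by intro h; exact hne h)
            · rw [← h2]; exact hz'x
          · rw [← h1]; exact hzx
        obtain ⟨L, v, h1, h2⟩ := core x'.length a b x' y' le_rfl hlx hba hcx hcy
        exact ⟨[], a, L, v, by simpa using h1, by rw [hba]; simpa using h2⟩

lemma dvd_of_mod_eq {q s k : ℕ} (h : s % q = (s + k) % q) : q ∣ k := by
  have h2 := (Nat.modEq_iff_dvd' (Nat.le_add_right s k)).mp h
  simpa using h2

theorem stmt3 (n P c d : ℕ) (hP0 : 0 < P) (hPn : P ≤ n) (hPeven : 2 ∣ P)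
    (hc : c < 1 + P / 2) (hd : d < 2) :
    ∀ x ∈ CSVT n P c d, ∀ y ∈ CSVT n P c d, x ≠ y →
      (deletionBall 1 x ∩ deletionBall 1 y).ncard ≤ 1 := by
  intro x hx y hy hxy
  obtain ⟨hxn, hxc, hxd, hxP⟩ := hx
  obtain ⟨hyn, hyc, hyd, hyP⟩ := hy
  have hsub : (deletionBall 1 x ∩ deletionBall 1 y).Subsingleton := by
    rintro z ⟨⟨hzx, hzlx⟩, ⟨hzy, hzly⟩⟩ z' ⟨⟨hz'x, hz'lx⟩, ⟨hz'y, hz'ly⟩⟩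
    by_contra hne
    obtain ⟨u, a, L, v, hxe, hye⟩ := main x.length x y z z' le_rfl
      (by omega) (by omega) (by omega) hzx hzy hz'x hz'y hxy hne
    -- the 2-periodic run constraint
    have hMP : L + 1 ≤ P := by
      have h := hxP (alt a (L+1)) ⟨u, v, hxe.symm⟩ (twoPeriodic_alt a (L+1))
      rwa [alt_length] at h
    -- parity forces the middle length to be even
    have hwxy : wt x % 2 = wt y % 2 := by rw [hxd, hyd]
    rw [hxe, hye] at hwxy
    simp only [wt_append] at hwxy
    have hMeven : (L + 1) % 2 = 0 := by
      by_contra hodd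
      obtain ⟨k, hk⟩ : ∃ k, L + 1 = 2*k+1 := ⟨L/2, by omega⟩
      rw [hk, wt_alt_odd, wt_alt_odd] at hwxy
      cases a <;> simp at hwxy <;> omega
    obtain ⟨k, hk⟩ : ∃ k, L + 1 = 2*k := ⟨(L+1)/2, by omega⟩
    have hk1 : 1 ≤ k := by omega
    -- VT syndrome
    have hsxy : synd x % (1 + P / 2) = synd y % (1 + P / 2) := by rw [hxc, hyc]
    rw [hxe, hye] at hsxy
    simp only [synd_append, wt_append, List.length_append, alt_length] at hsxy
    rw [hk, wt_alt_even, wt_alt_even] at hsxy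
    have key : ∀ A B : ℕ, A % (1 + P / 2) = B % (1 + P / 2) → B = A + k →
        (1 + P / 2) ∣ k := fun A B h hE => dvd_of_mod_eq (hE ▸ h)
    have hdvd : (1 + P / 2) ∣ k := by
      cases a with
      | true =>
        simp only [Bool.not_true, synd_alt_true, synd_alt_false] at hsxy
        exact key _ _ hsxy (by ring)
      | false =>
        simp only [Bool.not_false, synd_alt_true, synd_alt_false] at hsxy
        exact key _ _ hsxy.symm (by ring)
    have hqk : 1 + P / 2 ≤ k := Nat.le_of_dvd (by omega) hdvd
    omega
  rcases hsub.eq_empty_or_singleton with h | ⟨w, h⟩ <;> simp [h]
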